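/- Let A be a unital ring, m ∈ ℕ with m ≥ 1, and e ∈ A be an element such that (e - e²)^m = 0 (i.e., e^m(1-e)^m = 0). Define f = Σ_{i=0}^{m-1} C(2m, i) e^{2m-i}(1-e)^i. Then f is an idempotent commuting with e, and e - f is nilpotent with (e - f)^m = 0. -/

import Mathlib

open Polynomial

theorem idempotent_from_binomial {A : Type*} [Ring A] (m : ℕ) (hm : 1 ≤ m) (e : A)
    (h : (e - e * e) ^ m = 0) :
    let f : A := ∑ i ∈ Finset.range m,
      ((2 * m).choose i : A) * e ^ (2 * m - i) * (1 - e) ^ i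
    f * f = f ∧ e * f = f * e ∧ (e - f) ^ m = 0 := by
  intro f
  set F : ℤ[X] := ∑ i ∈ Finset.range m,
    ((2 * m).choose i : ℤ[X]) * X ^ (2 * m - i) * (1 - X) ^ i with hF
  set G : ℤ[X] := ∑ i ∈ Finset.Ico m (2 * m + 1),
    ((2 * m).choose i : ℤ[X]) * X ^ (2 * m - i) * (1 - X) ^ i with hG
  -- the key vanishing lemma
  have key : ∀ p : ℤ[X], (X * (1 - X) : ℤ[X]) ^ m ∣ p → (aeval e) p = 0 := by
    rintro p ⟨q, rfl⟩
    rw [map_mul, map_pow, map_mul, map_sub, map_one, aeval_X]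
    have he : e * (1 - e) = e - e * e := by rw [mul_sub, mul_one]
    rw [he, h, zero_mul]
  -- F + G = 1
  have FG1 : F + G = 1 := by
    have hb : (1 : ℤ[X]) = ∑ i ∈ Finset.range (2 * m + 1),
        ((2 * m).choose i : ℤ[X]) * X ^ (2 * m - i) * (1 - X) ^ i := by
      have h1 : ((1 - X) + X : ℤ[X]) = 1 := by ring
      have h2 := add_pow (1 - X : ℤ[X]) X (2 * m)
      rw [h1, one_pow] at h2
      refine h2.trans (Finset.sum_congr rfl fun i hi => ?_)
      ring
    rw [hb, Finset.range_eq_Ico,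
      ← Finset.sum_Ico_consecutive _ (Nat.zero_le m) (by omega : m ≤ 2 * m + 1),
      ← Finset.range_eq_Ico]
  -- divisibilities
  have hdF : (X : ℤ[X]) ^ m ∣ F := by
    refine Finset.dvd_sum fun i hi => ?_
    have hi' : i < m := Finset.mem_range.mp hi
    exact ((pow_dvd_pow X (by omega : m ≤ 2 * m - i)).mul_left _).mul_right _
  have hXF : (X : ℤ[X]) ∣ F :=
    dvd_trans (dvd_pow_self X (by omega : m ≠ 0)) hdF
  have hdG : ((1 - X : ℤ[X])) ^ m ∣ G := by
    refine Finset.dvd_sum fun i hi => ?_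
    have hi' : m ≤ i := (Finset.mem_Ico.mp hi).1
    exact ((pow_dvd_pow (1 - X : ℤ[X]) hi').mul_left _)
  have h1G : ((1 - X : ℤ[X])) ∣ G :=
    dvd_trans (dvd_pow_self _ (by omega : m ≠ 0)) hdG
  -- X - F is divisible by X*(1-X)
  obtain ⟨q, hq⟩ := hXF
  obtain ⟨r, hr⟩ := h1G
  have hXFdvd : (X * (1 - X) : ℤ[X]) ∣ X - F := by
    refine ⟨r - q, ?_⟩
    linear_combination (X - 1 : ℤ[X]) * hq + X * hr - X * FG1
  -- relating f to F
  have hf : f = (aeval e) F := by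
    simp only [hF, map_sum, map_mul, map_pow, map_sub, map_one, aeval_X, map_natCast]
    rfl
  refine ⟨?_, ?_, ?_⟩
  · have : f * f - f = 0 := by
      rw [hf, ← map_mul, ← map_sub]
      apply key
      have hFF : F * F - F = -(F * G) := by linear_combination F * FG1
      rw [hFF, dvd_neg, mul_pow]
      exact mul_dvd_mul hdF hdG
    exact sub_eq_zero.mp this
  · have l : (aeval e) (X * F) = e * f := by rw [map_mul, aeval_X, hf]
    have r : (aeval e) (F * X) = f * e := by rw [map_mul, aeval_X, hf]
    rw [← l, ← r, mul_comm]
  · have hef : e - f = (aeval e) (X - F) := by rw [map_sub, aeval_X, hf]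
    rw [hef, ← map_pow]
    exact key _ (pow_dvd_pow_of_dvd hXFdvd m)
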